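/- Ultracontractive bound: ‖e^{Q_n f}‖_∞ ≤ ‖e^f‖_1 · (nh)^{−N/2} · (2π)^{−N/2}, with equality attainable when f(x) = −b|x − x̄|²/2 and nh = 1/b. -/

import Mathlib

open MeasureTheory
open scoped BigOperators Real

noncomputable section

/-- Semi-Lagrangian discrete semigroup for `L(q) = |q|²/2`. -/
def Q {N : ℕ} (h : ℝ) (f : EuclideanSpace ℝ (Fin N) → ℝ) (n : ℕ)
    (x : EuclideanSpace ℝ (Fin N)) : ℝ :=
  ⨅ q : Fin n → EuclideanSpace ℝ (Fin N),
    (f (x - h • ∑ k, q k) + h * ∑ k, ‖q k‖ ^ 2 / 2)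

section aux

variable {N : ℕ}

lemma gauss_integrable {c : ℝ} (hc : 0 < c) :
    Integrable (fun v : EuclideanSpace ℝ (Fin N) => Real.exp (-c * ‖v‖ ^ 2)) := by
  have h := (GaussianFourier.integrable_cexp_neg_mul_sq_norm_add
      (V := EuclideanSpace ℝ (Fin N))
      (b := (c : ℂ)) (by simpa using hc) 0 (0 : EuclideanSpace ℝ (Fin N))).norm
  refine h.congr (Filter.Eventually.of_forall fun v => ?_)
  simp [Complex.norm_exp]
  left
  norm_cast

lemma gauss_integral_shift {c : ℝ} (hc : 0 < c) (x : EuclideanSpace ℝ (Fin N)) :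
    ∫ y : EuclideanSpace ℝ (Fin N), Real.exp (-c * ‖x - y‖ ^ 2)
      = (π / c) ^ ((N : ℝ) / 2) := by
  rw [integral_sub_left_eq_self
      (fun v : EuclideanSpace ℝ (Fin N) => Real.exp (-c * ‖v‖ ^ 2)) volume x,
    GaussianFourier.integral_rexp_neg_mul_sq_norm hc]
  norm_num [finrank_euclideanSpace_fin]

lemma sum_const_vec {n : ℕ} (v : EuclideanSpace ℝ (Fin N)) :
    ∑ _k : Fin n, v = (n : ℝ) • v := by
  rw [Finset.sum_const, Finset.card_univ, Fintype.card_fin, ← Nat.cast_smul_eq_nsmul ℝ]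

end aux

theorem ultracontractive_bound {N : ℕ} (h : ℝ) (hh : 0 < h) (n : ℕ) (hn : 1 ≤ n) :
    (∀ f : EuclideanSpace ℝ (Fin N) → ℝ,
      Integrable (fun x => Real.exp (f x)) volume →
      (∀ x : EuclideanSpace ℝ (Fin N),
        BddBelow (Set.range fun q : Fin n → EuclideanSpace ℝ (Fin N) =>
          f (x - h • ∑ k, q k) + h * ∑ k, ‖q k‖ ^ 2 / 2)) →
      ∀ x : EuclideanSpace ℝ (Fin N),
        Real.exp (Q h f n x)
          ≤ (∫ y, Real.exp (f y)) * ((n : ℝ) * h) ^ (-(N : ℝ) / 2) *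
              (2 * π) ^ (-(N : ℝ) / 2)) ∧
    (∀ (b : ℝ), 0 < b → ∀ xbar : EuclideanSpace ℝ (Fin N), (n : ℝ) * h = 1 / b →
      (⨆ x : EuclideanSpace ℝ (Fin N),
          Real.exp (Q h (fun y => -b * ‖y - xbar‖ ^ 2 / 2) n x))
        = (∫ y : EuclideanSpace ℝ (Fin N), Real.exp (-b * ‖y - xbar‖ ^ 2 / 2)) *
            ((n : ℝ) * h) ^ (-(N : ℝ) / 2) * (2 * π) ^ (-(N : ℝ) / 2)) := by
  have hn0 : (0 : ℝ) < (n : ℝ) := by exact_mod_cast hn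
  set t : ℝ := (n : ℝ) * h with ht_def
  have ht : 0 < t := mul_pos hn0 hh
  have htne : t ≠ 0 := ne_of_gt ht
  constructor
  · -- Part 1: the ultracontractive bound
    intro f hf hbdd x
    have hc : (0 : ℝ) < 1 / (2 * t) := by positivity
    have key0 : ∀ y : EuclideanSpace ℝ (Fin N),
        Q h f n x ≤ f y + 1 / (2 * t) * ‖x - y‖ ^ 2 := by
      intro y
      have hQle := ciInf_le (hbdd x)
        (fun _ : Fin n => (t⁻¹ • (x - y) : EuclideanSpace ℝ (Fin N)))
      have harg : x - h • ∑ _k : Fin n, (t⁻¹ • (x - y) : EuclideanSpace ℝ (Fin N)) = y := by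
        rw [sum_const_vec, smul_smul, smul_smul]
        have hm : h * (n : ℝ) * t⁻¹ = 1 := by
          field_simp [ht_def]
          ring
        rw [hm, one_smul, sub_sub_cancel]
      have hcost : h * ∑ _k : Fin n, ‖(t⁻¹ • (x - y) : EuclideanSpace ℝ (Fin N))‖ ^ 2 / 2
          = 1 / (2 * t) * ‖x - y‖ ^ 2 := by
        rw [Finset.sum_const, Finset.card_univ, Fintype.card_fin, nsmul_eq_mul,
          norm_smul, Real.norm_eq_abs, abs_of_pos (inv_pos.mpr ht)]
        field_simp [ht_def]
        ring
      rw [harg, hcost] at hQle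
      exact hQle
    have key : ∀ y : EuclideanSpace ℝ (Fin N),
        Real.exp (Q h f n x) * Real.exp (-(1 / (2 * t)) * ‖x - y‖ ^ 2)
          ≤ Real.exp (f y) := by
      intro y
      rw [← Real.exp_add, Real.exp_le_exp]
      have := key0 y
      linarith
    have hgint : Integrable
        (fun y : EuclideanSpace ℝ (Fin N) =>
          Real.exp (Q h f n x) * Real.exp (-(1 / (2 * t)) * ‖x - y‖ ^ 2)) :=
      ((gauss_integrable hc).comp_sub_left x).const_mul _
    have hint := integral_mono hgint hf key
    rw [integral_const_mul, gauss_integral_shift hc x] at hint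
    have hPeq : π / (1 / (2 * t)) = 2 * π * t := by
      field_simp
    rw [hPeq] at hint
    set P : ℝ := (2 * π * t) ^ ((N : ℝ) / 2) with hP_def
    have hP : 0 < P := Real.rpow_pos_of_pos (by positivity) _
    have hfac : t ^ (-(N : ℝ) / 2) * (2 * π) ^ (-(N : ℝ) / 2) = P⁻¹ := by
      rw [← Real.mul_rpow (le_of_lt ht) (by positivity), neg_div,
        Real.rpow_neg (by positivity), hP_def]
      congr 2
      ring
    rw [mul_assoc, hfac, ← div_eq_mul_inv, le_div_iff₀ hP]
    exact hint
  · -- Part 2: equality case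
    intro b hb xbar hbt
    have hQ0 : ∀ x : EuclideanSpace ℝ (Fin N),
        Q h (fun y => -b * ‖y - xbar‖ ^ 2 / 2) n x = 0 := by
      intro x
      unfold Q
      by_cases hx : x = xbar
      · subst hx
        have hnonneg : ∀ q : Fin n → EuclideanSpace ℝ (Fin N),
            (0 : ℝ) ≤ -b * ‖x - h • ∑ k, q k - x‖ ^ 2 / 2 + h * ∑ k, ‖q k‖ ^ 2 / 2 := by
          intro q
          have h1 : ‖x - h • ∑ k, q k - x‖ = h * ‖∑ k, q k‖ := by
            rw [sub_sub_cancel_left, norm_neg, norm_smul, Real.norm_eq_abs, abs_of_pos hh]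
          have h2 : ‖∑ k, q k‖ ^ 2 ≤ (n : ℝ) * ∑ k, ‖q k‖ ^ 2 := by
            have h3 : ‖∑ k, q k‖ ≤ ∑ k, ‖q k‖ := norm_sum_le _ _
            have h4 : (∑ k, ‖q k‖) ^ 2 ≤ (n : ℝ) * ∑ k, ‖q k‖ ^ 2 := by
              have := sq_sum_le_card_mul_sum_sq (s := (Finset.univ : Finset (Fin n)))
                (f := fun k => ‖q k‖)
              simpa using this
            have h5 : 0 ≤ ∑ k, ‖q k‖ :=
              Finset.sum_nonneg (fun k _ => norm_nonneg (q k))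
            nlinarith [norm_nonneg (∑ k, q k)]
          have hbhn : b * ((n : ℝ) * h) = 1 := by
            rw [← ht_def, hbt]; field_simp
          have hsum0 : (0 : ℝ) ≤ ∑ k, ‖q k‖ ^ 2 :=
            Finset.sum_nonneg (fun k _ => by positivity)
          have hsplit : ∑ k, ‖q k‖ ^ 2 / 2 = (∑ k, ‖q k‖ ^ 2) / 2 :=
            (Finset.sum_div _ _ _).symm
          rw [h1, hsplit, mul_pow]
          have e1 : b * h ^ 2 * ((n : ℝ) * ∑ k, ‖q k‖ ^ 2) = h * ∑ k, ‖q k‖ ^ 2 := by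
            linear_combination (h * ∑ k, ‖q k‖ ^ 2) * hbhn
          have e2 := mul_le_mul_of_nonneg_left h2 (show (0 : ℝ) ≤ b * h ^ 2 by positivity)
          nlinarith [e2, e1]
        have hbdd : BddBelow (Set.range fun q : Fin n → EuclideanSpace ℝ (Fin N) =>
            -b * ‖x - h • ∑ k, q k - x‖ ^ 2 / 2 + h * ∑ k, ‖q k‖ ^ 2 / 2) := by
          refine ⟨0, ?_⟩
          rintro v ⟨q, rfl⟩
          exact hnonneg q
        refine le_antisymm ?_ (le_ciInf hnonneg)
        · have h0 := ciInf_le hbdd (fun _ : Fin n => (0 : EuclideanSpace ℝ (Fin N)))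
          simpa using h0
      · apply Real.iInf_of_not_bddBelow
        rintro ⟨c, hc⟩
        set z : EuclideanSpace ℝ (Fin N) := x - xbar with hz_def
        have hz : z ≠ 0 := sub_ne_zero.mpr hx
        have hznorm : 0 < ‖z‖ := norm_pos_iff.mpr hz
        set s : ℝ := (c - 1 + b * ‖z‖ ^ 2 / 2) / ‖z‖ ^ 2 with hs_def
        have hval := hc (Set.mem_range_self
          (fun _ : Fin n => (s • z : EuclideanSpace ℝ (Fin N))))
        have hnh : (n : ℝ) * h = 1 / b := by rw [← ht_def]; exact hbt
        have harg : x - h • ∑ _k : Fin n, (s • z : EuclideanSpace ℝ (Fin N)) - xbar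
            = (1 - s / b) • z := by
          rw [sum_const_vec, smul_smul, smul_smul]
          have hcomm : h * (n : ℝ) = 1 / b := by rw [mul_comm]; exact hnh
          have hm : h * (n : ℝ) * s = s / b := by
            rw [hcomm]; ring
          rw [hm, sub_smul, one_smul, hz_def]
          abel
        have hcost : h * ∑ _k : Fin n, ‖(s • z : EuclideanSpace ℝ (Fin N))‖ ^ 2 / 2
            = s ^ 2 * ‖z‖ ^ 2 / (2 * b) := by
          rw [Finset.sum_const, Finset.card_univ, Fintype.card_fin, nsmul_eq_mul,
            norm_smul, Real.norm_eq_abs, mul_pow, sq_abs]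
          have hcomm : h * (n : ℝ) = 1 / b := by rw [mul_comm]; exact hnh
          rw [← mul_assoc, hcomm, one_div_mul_eq_div, div_div]
        have hvalue : -b * ‖x - h • ∑ _k : Fin n, (s • z : EuclideanSpace ℝ (Fin N)) - xbar‖ ^ 2 / 2
            + h * ∑ _k : Fin n, ‖(s • z : EuclideanSpace ℝ (Fin N))‖ ^ 2 / 2
            = s * ‖z‖ ^ 2 - b * ‖z‖ ^ 2 / 2 := by
          rw [harg, hcost, norm_smul, Real.norm_eq_abs, mul_pow, sq_abs]
          have hb' : b ≠ 0 := ne_of_gt hb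
          field_simp
          ring
        rw [hvalue] at hval
        have hsv : s * ‖z‖ ^ 2 = c - 1 + b * ‖z‖ ^ 2 / 2 := by
          rw [hs_def]
          field_simp
        rw [hsv] at hval
        linarith
    have hsup : (⨆ x : EuclideanSpace ℝ (Fin N),
        Real.exp (Q h (fun y => -b * ‖y - xbar‖ ^ 2 / 2) n x)) = 1 := by
      have hfuneq : (fun x : EuclideanSpace ℝ (Fin N) =>
          Real.exp (Q h (fun y => -b * ‖y - xbar‖ ^ 2 / 2) n x))
          = fun _ => (1 : ℝ) := by
        funext x; rw [hQ0 x, Real.exp_zero]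
      rw [hfuneq, ciSup_const]
    rw [hsup]
    have hb2 : (0 : ℝ) < b / 2 := by positivity
    have hInt : ∫ y : EuclideanSpace ℝ (Fin N), Real.exp (-b * ‖y - xbar‖ ^ 2 / 2)
        = (π / (b / 2)) ^ ((N : ℝ) / 2) := by
      rw [← gauss_integral_shift hb2 xbar]
      congr 1
      funext y
      rw [norm_sub_rev xbar y]
      congr 1
      ring
    rw [hInt, hbt, neg_div]
    have hA : (0 : ℝ) < (2 * π) ^ ((N : ℝ) / 2) := Real.rpow_pos_of_pos (by positivity) _
    have hB : (0 : ℝ) < b ^ ((N : ℝ) / 2) := Real.rpow_pos_of_pos hb _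
    have e1 : π / (b / 2) = 2 * π / b := by field_simp
    have e2 : (2 * π / b) ^ ((N : ℝ) / 2)
        = (2 * π) ^ ((N : ℝ) / 2) / b ^ ((N : ℝ) / 2) :=
      Real.div_rpow (by positivity) hb.le _
    have e3 : ((1 : ℝ) / b) ^ (-((N : ℝ) / 2)) = b ^ ((N : ℝ) / 2) := by
      rw [one_div, Real.rpow_neg (inv_nonneg.mpr hb.le), Real.inv_rpow hb.le, inv_inv]
    have e4 : (2 * π) ^ (-((N : ℝ) / 2)) = ((2 * π) ^ ((N : ℝ) / 2))⁻¹ :=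
      Real.rpow_neg (by positivity) _
    rw [e1, e2, e3, e4]
    field_simp
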